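/- Concatenation of paths realizes the tensor product of geometric crystals: for π₁ ∈ C₀([0,T],V), π₂ ∈ C₀([0,S],V) and every c ∈ ℝ, (i) (π₁⋆π₂)(T+S) = π₁(T) + π₂(S); (ii) ε_α(π₁⋆π₂) = ε_α(π₁) + log(1 + e^{ε_α(π₂) − φ_α(π₁)}); (iii) e_α^c·(π₁⋆π₂) = (e_α^{c₁}·π₁) ⋆ (e_α^{c₂}·π₂), where c₁ = log((e^{c+φ_α(π₁)} + e^{ε_α(π₂)})/(e^{φ_α(π₁)} + e^{ε_α(π₂)})) and c₂ = c − c₁. -/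

import Mathlib

open MeasureTheory

/-- `ε_α(π) = log ∫₀^T e^{-α(π(s))} ds`. -/
noncomputable def pathEps {V : Type*} [NormedAddCommGroup V] [NormedSpace ℝ V]
    (α : V →ₗ[ℝ] ℝ) (T : ℝ) (π : ℝ → V) : ℝ :=
  Real.log (∫ s in (0:ℝ)..T, Real.exp (-α (π s)))

/-- `φ_α(π) = α(π(T)) + ε_α(π)`. -/
noncomputable def pathPhi {V : Type*} [NormedAddCommGroup V] [NormedSpace ℝ V]
    (α : V →ₗ[ℝ] ℝ) (T : ℝ) (π : ℝ → V) : ℝ :=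
  α (π T) + pathEps α T π

/-- The geometric Littelmann operator on paths over the horizon `T`. -/
noncomputable def pathAct {V : Type*} [NormedAddCommGroup V] [NormedSpace ℝ V]
    (α : V →ₗ[ℝ] ℝ) (αv : V) (T : ℝ) (c : ℝ) (π : ℝ → V) : ℝ → V :=
  fun t => π t + Real.log (1 + ((Real.exp c - 1) / Real.exp (pathEps α T π)) *
    ∫ s in (0:ℝ)..t, Real.exp (-α (π s))) • αv

/-- Concatenation `π₁ ⋆ π₂` of a path on `[0,T]` and a path on `[0,S]`. -/
noncomputable def pathConcat {V : Type*} [AddCommGroup V] (T : ℝ) (π₁ π₂ : ℝ → V) : ℝ → V :=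
  fun t => if t ≤ T then π₁ t else π₁ T + π₂ (t - T)

set_option maxHeartbeats 1000000 in
private lemma concat_aux_alg (x A J K G : ℝ) (hA : A ≠ 0) (hJ : J ≠ 0) (hK : K ≠ 0)
    (hd : A * J + K ≠ 0) (hn : x * (A * J) + K ≠ 0) :
    1 + (x - 1) / (J + A⁻¹ * K) * (J + A⁻¹ * G) =
      (x * (A * J) + K) / (A * J + K) *
        (1 + (x / ((x * (A * J) + K) / (A * J + K)) - 1) / K * G) := by
  have hE : J + A⁻¹ * K ≠ 0 := by
    intro h
    apply hd
    have h2 : A * (J + A⁻¹ * K) = A * J + K := by field_simp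
    rw [h, mul_zero] at h2
    linarith [h2]
  have hd2 : A * K + A ^ 2 * J ≠ 0 := by
    intro h
    exact mul_ne_zero hA hd (by linear_combination h)
  have hu : (A * K + A ^ 2 * J) * (A * K + A ^ 2 * J)⁻¹ = 1 := mul_inv_cancel₀ hd2
  have e1 : J + A⁻¹ * K = (A * J + K) / A := by field_simp
  have e2 : J + A⁻¹ * G = (A * J + G) / A := by field_simp
  have hn' : x * A * J + K ≠ 0 := by intro h; apply hn; linarith
  rw [e1, e2, div_div_eq_mul_div]
  field_simp
  ring

/-- Concatenation of paths realizes the tensor product of geometric crystals. -/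
theorem concat_realizes_tensor_product
    {V : Type*} [NormedAddCommGroup V] [NormedSpace ℝ V] [FiniteDimensional ℝ V]
    (T S : ℝ) (hT : 0 < T) (hS : 0 < S)
    (α : V →ₗ[ℝ] ℝ) (αv : V) (hpair : α αv = 2)
    (π₁ π₂ : ℝ → V)
    (h₁ : ContinuousOn π₁ (Set.Icc 0 T)) (h₁0 : π₁ 0 = 0)
    (h₂ : ContinuousOn π₂ (Set.Icc 0 S)) (h₂0 : π₂ 0 = 0)
    (c c₁ c₂ : ℝ)
    (hc₁ : c₁ = Real.log ((Real.exp (c + pathPhi α T π₁) + Real.exp (pathEps α S π₂)) /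
      (Real.exp (pathPhi α T π₁) + Real.exp (pathEps α S π₂))))
    (hc₂ : c₂ = c - c₁) :
    (pathConcat T π₁ π₂ (T + S) = π₁ T + π₂ S) ∧
    (pathEps α (T + S) (pathConcat T π₁ π₂) =
      pathEps α T π₁ + Real.log (1 + Real.exp (pathEps α S π₂ - pathPhi α T π₁))) ∧
    (∀ t ∈ Set.Icc (0:ℝ) (T + S),
      pathAct α αv (T + S) c (pathConcat T π₁ π₂) t =
        pathConcat T (pathAct α αv T c₁ π₁) (pathAct α αv S c₂ π₂) t) := by
  classical
  have hαc : Continuous α := α.continuous_of_finiteDimensional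
  set I₁ : ℝ := ∫ s in (0:ℝ)..T, Real.exp (-α (π₁ s)) with hI₁def
  set I₂ : ℝ := ∫ s in (0:ℝ)..S, Real.exp (-α (π₂ s)) with hI₂def
  set a : ℝ := α (π₁ T) with hadef
  have hf₁c : ContinuousOn (fun s => Real.exp (-α (π₁ s))) (Set.Icc 0 T) :=
    Real.continuous_exp.comp_continuousOn (hαc.comp_continuousOn h₁).neg
  have hf₂c : ContinuousOn (fun s => Real.exp (-α (π₂ s))) (Set.Icc 0 S) :=
    Real.continuous_exp.comp_continuousOn (hαc.comp_continuousOn h₂).neg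
  have hint₁ : ∀ u v : ℝ, u ∈ Set.Icc (0:ℝ) T → v ∈ Set.Icc (0:ℝ) T →
      IntervalIntegrable (fun s => Real.exp (-α (π₁ s))) volume u v := by
    intro u v hu hv
    exact (hf₁c.mono (Set.uIcc_subset_uIcc (by rwa [Set.uIcc_of_le hT.le])
      (by rwa [Set.uIcc_of_le hT.le]) |>.trans (by rw [Set.uIcc_of_le hT.le]))).intervalIntegrable
  have hint₂ : ∀ u v : ℝ, u ∈ Set.Icc (0:ℝ) S → v ∈ Set.Icc (0:ℝ) S →
      IntervalIntegrable (fun s => Real.exp (-α (π₂ s))) volume u v := by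
    intro u v hu hv
    exact (hf₂c.mono (Set.uIcc_subset_uIcc (by rwa [Set.uIcc_of_le hS.le])
      (by rwa [Set.uIcc_of_le hS.le]) |>.trans (by rw [Set.uIcc_of_le hS.le]))).intervalIntegrable
  have hI₁pos : 0 < I₁ :=
    intervalIntegral.intervalIntegral_pos_of_pos
      (hint₁ 0 T (Set.left_mem_Icc.2 hT.le) (Set.right_mem_Icc.2 hT.le))
      (fun x => Real.exp_pos _) hT
  have hI₂pos : 0 < I₂ :=
    intervalIntegral.intervalIntegral_pos_of_pos
      (hint₂ 0 S (Set.left_mem_Icc.2 hS.le) (Set.right_mem_Icc.2 hS.le))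
      (fun x => Real.exp_pos _) hS
  -- pointwise descriptions of the concatenated integrand
  have hgT : ∀ s : ℝ, s ≤ T →
      Real.exp (-α (pathConcat T π₁ π₂ s)) = Real.exp (-α (π₁ s)) := by
    intro s hs; simp [pathConcat, hs]
  have hgS : ∀ s : ℝ, T ≤ s →
      Real.exp (-α (pathConcat T π₁ π₂ s)) = Real.exp (-a) * Real.exp (-α (π₂ (s - T))) := by
    intro s hs
    by_cases h : s ≤ T
    · have hsT : s = T := le_antisymm h hs
      subst hsT
      simp [pathConcat, h₂0, ← Real.exp_add, hadef]
    · simp only [pathConcat, if_neg h]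
      rw [map_add, neg_add, Real.exp_add]
  have hgcA : ContinuousOn (fun s => Real.exp (-α (pathConcat T π₁ π₂ s))) (Set.Icc 0 T) :=
    hf₁c.congr (fun s hs => hgT s hs.2)
  have hgcB : ContinuousOn (fun s => Real.exp (-α (pathConcat T π₁ π₂ s)))
      (Set.Icc T (T + S)) := by
    refine ContinuousOn.congr ?_ (fun s hs => hgS s hs.1)
    exact continuousOn_const.mul (hf₂c.comp (continuous_sub_right T).continuousOn
      (fun s hs => ⟨by linarith [hs.1], by linarith [hs.2]⟩))
  -- the key splitting formula
  have key : ∀ t : ℝ, T ≤ t → t ≤ T + S →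
      (∫ s in (0:ℝ)..t, Real.exp (-α (pathConcat T π₁ π₂ s))) =
        I₁ + Real.exp (-a) * ∫ u in (0:ℝ)..(t - T), Real.exp (-α (π₂ u)) := by
    intro t h1 h2
    have hIA : IntervalIntegrable (fun s => Real.exp (-α (pathConcat T π₁ π₂ s))) volume 0 T := by
      refine (hgcA.mono ?_).intervalIntegrable
      rw [Set.uIcc_of_le hT.le]
    have hIB : IntervalIntegrable (fun s => Real.exp (-α (pathConcat T π₁ π₂ s))) volume T t := by
      refine ((hgcB.mono (Set.Icc_subset_Icc le_rfl h2)).mono ?_).intervalIntegrable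
      rw [Set.uIcc_of_le h1]
    rw [← intervalIntegral.integral_add_adjacent_intervals hIA hIB]
    congr 1
    · rw [hI₁def]
      refine intervalIntegral.integral_congr (fun s hs => ?_)
      rw [Set.uIcc_of_le hT.le] at hs
      exact hgT s hs.2
    · rw [intervalIntegral.integral_congr (g := fun s => Real.exp (-a) *
        Real.exp (-α (π₂ (s - T)))) (fun s hs => by
          rw [Set.uIcc_of_le h1] at hs; exact hgS s hs.1)]
      rw [intervalIntegral.integral_const_mul,
        intervalIntegral.integral_comp_sub_right (fun u => Real.exp (-α (π₂ u))) T, sub_self]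
  have hE : (∫ s in (0:ℝ)..(T + S), Real.exp (-α (pathConcat T π₁ π₂ s))) =
      I₁ + Real.exp (-a) * I₂ := by
    have h := key (T + S) (by linarith) le_rfl
    rwa [add_sub_cancel_left] at h
  have hEpos : 0 < I₁ + Real.exp (-a) * I₂ :=
    add_pos hI₁pos (mul_pos (Real.exp_pos _) hI₂pos)
  have hε₁ : pathEps α T π₁ = Real.log I₁ := rfl
  have hε₂ : pathEps α S π₂ = Real.log I₂ := rfl
  have hφ₁ : pathPhi α T π₁ = a + Real.log I₁ := rfl
  have h2 : pathEps α (T + S) (pathConcat T π₁ π₂) = Real.log (I₁ + Real.exp (-a) * I₂) := by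
    rw [pathEps, hE]
  have hexpE : Real.exp (pathEps α (T + S) (pathConcat T π₁ π₂)) =
      I₁ + Real.exp (-a) * I₂ := by rw [h2, Real.exp_log hEpos]
  have hexpε₁ : Real.exp (pathEps α T π₁) = I₁ := by rw [hε₁, Real.exp_log hI₁pos]
  have hexpε₂ : Real.exp (pathEps α S π₂) = I₂ := by rw [hε₂, Real.exp_log hI₂pos]
  have hexpφ₁ : Real.exp (pathPhi α T π₁) = Real.exp a * I₁ := by
    rw [hφ₁, Real.exp_add, Real.exp_log hI₁pos]
  have hA0 : (0:ℝ) < Real.exp a := Real.exp_pos a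
  have hden : 0 < Real.exp a * I₁ + I₂ := add_pos (mul_pos hA0 hI₁pos) hI₂pos
  have hc₁exp : Real.exp c₁ = (Real.exp c * (Real.exp a * I₁) + I₂) / (Real.exp a * I₁ + I₂) := by
    rw [hc₁, Real.exp_log (by rw [hexpφ₁, hexpε₂, Real.exp_add, hexpφ₁]; positivity),
      Real.exp_add, hexpφ₁, hexpε₂]
  -- part (i)
  have part1 : pathConcat T π₁ π₂ (T + S) = π₁ T + π₂ S := by
    simp only [pathConcat]
    rw [if_neg (by linarith), add_sub_cancel_left]
  refine ⟨part1, ?_, ?_⟩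
  · -- part (ii)
    rw [h2, hε₁, hε₂, hφ₁, Real.exp_sub, Real.exp_log hI₂pos, Real.exp_add,
      Real.exp_log hI₁pos]
    rw [← Real.log_mul hI₁pos.ne' (by positivity)]
    congr 1
    rw [Real.exp_neg]
    field_simp
  · -- part (iii)
    intro t ht
    by_cases htT : t ≤ T
    · have hR : pathConcat T (pathAct α αv T c₁ π₁) (pathAct α αv S c₂ π₂) t =
          pathAct α αv T c₁ π₁ t := by simp [pathConcat, htT]
      rw [hR]
      simp only [pathAct]
      have hFt : (∫ s in (0:ℝ)..t, Real.exp (-α (pathConcat T π₁ π₂ s))) =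
          ∫ s in (0:ℝ)..t, Real.exp (-α (π₁ s)) := by
        refine intervalIntegral.integral_congr (fun s hs => ?_)
        rw [Set.uIcc_of_le ht.1] at hs
        exact hgT s (hs.2.trans htT)
      have hL : pathConcat T π₁ π₂ t = π₁ t := by simp [pathConcat, htT]
      rw [hFt, hL, hexpE, hexpε₁]
      have hcoef : (Real.exp c - 1) / (I₁ + Real.exp (-a) * I₂) =
          (Real.exp c₁ - 1) / I₁ := by
        rw [hc₁exp, Real.exp_neg]
        field_simp
        ring
      rw [hcoef]
    · push_neg at htT
      have hR : pathConcat T (pathAct α αv T c₁ π₁) (pathAct α αv S c₂ π₂) t =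
          pathAct α αv T c₁ π₁ T + pathAct α αv S c₂ π₂ (t - T) := by
        simp [pathConcat, not_le.2 htT]
      rw [hR]
      have hactT : pathAct α αv T c₁ π₁ T = π₁ T + c₁ • αv := by
        simp only [pathAct, hexpε₁, ← hI₁def]
        rw [div_mul_cancel₀ _ hI₁pos.ne', add_sub_cancel, Real.log_exp]
      have hL : pathConcat T π₁ π₂ t = π₁ T + π₂ (t - T) := by
        simp [pathConcat, not_le.2 htT]
      simp only [pathAct, hexpE, hexpε₂, hL, key t htT.le ht.2]
      set G : ℝ := ∫ u in (0:ℝ)..(t - T), Real.exp (-α (π₂ u)) with hGdef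
      have hG0 : 0 ≤ G :=
        intervalIntegral.integral_nonneg (by linarith [ht.2]) (fun u _ => (Real.exp_pos _).le)
      have hGI₂ : G ≤ I₂ := by
        have htS1 : t - T ∈ Set.Icc (0:ℝ) S := ⟨by linarith, by linarith [ht.2]⟩
        have hadd : G + (∫ u in (t - T)..S, Real.exp (-α (π₂ u))) = I₂ :=
          intervalIntegral.integral_add_adjacent_intervals
            (hint₂ 0 (t - T) (Set.left_mem_Icc.2 hS.le) htS1)
            (hint₂ (t - T) S htS1 (Set.right_mem_Icc.2 hS.le))
        have hnn : 0 ≤ ∫ u in (t - T)..S, Real.exp (-α (π₂ u)) :=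
          intervalIntegral.integral_nonneg (by linarith [ht.2]) (fun u _ => (Real.exp_pos _).le)
        linarith
      have hc₂exp : Real.exp c₂ = Real.exp c / Real.exp c₁ := by
        rw [hc₂, Real.exp_sub]
      have hXpos : 0 < 1 + (Real.exp c₂ - 1) / I₂ * G := by
        have hrw : 1 + (Real.exp c₂ - 1) / I₂ * G = ((I₂ - G) + Real.exp c₂ * G) / I₂ := by
          field_simp; ring
        rw [hrw]
        refine div_pos ?_ hI₂pos
        rcases eq_or_lt_of_le hG0 with h | h
        · rw [← h]; simpa using hI₂pos
        · have := mul_pos (Real.exp_pos c₂) h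
          linarith
      have hmain : 1 + (Real.exp c - 1) / (I₁ + Real.exp (-a) * I₂) *
          (I₁ + Real.exp (-a) * G) =
          Real.exp c₁ * (1 + (Real.exp c₂ - 1) / I₂ * G) := by
        rw [hc₂exp, hc₁exp, Real.exp_neg]
        exact concat_aux_alg (Real.exp c) (Real.exp a) I₁ I₂ G (Real.exp_pos a).ne'
          hI₁pos.ne' hI₂pos.ne' hden.ne' (by positivity)
      have hlog : Real.log (1 + (Real.exp c - 1) / (I₁ + Real.exp (-a) * I₂) *
          (I₁ + Real.exp (-a) * G)) =
          c₁ + Real.log (1 + (Real.exp c₂ - 1) / I₂ * G) := by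
        rw [hmain, Real.log_mul (Real.exp_pos c₁).ne' hXpos.ne', Real.log_exp]
      have hlog1 : Real.log (1 + (Real.exp c₁ - 1) / Real.exp (pathEps α T π₁) *
          ∫ s in (0:ℝ)..T, Real.exp (-α (π₁ s))) = c₁ := by
        rw [hexpε₁, ← hI₁def, div_mul_cancel₀ _ hI₁pos.ne', add_sub_cancel, Real.log_exp]
      rw [hlog, hlog1, add_smul]
      abel
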